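/- arXiv:2512.16973 — 3 statements merged into one kernel-verified Lean document; each statement's English description precedes it below -/
import Mathlib

section
/- Ekeland's variational principle (order-theoretic form): Let (X, d) be a complete metric space, f : X → [0, ∞] lower semicontinuous, and x̄ ∈ X. Then there exists ȳ ∈ X with f(ȳ) + d(x̄, ȳ) ≤ f(x̄) such that f(z) + d(z, ȳ) ≥ f(ȳ) for all z ∈ X. -/
open ENNReal

open Filter Topology in
theorem aux {X : Type*} [MetricSpace X] [CompleteSpace X]
    (f : X → ℝ≥0∞) (hf : LowerSemicontinuous f) (x0 : X) (hx0 : f x0 ≠ ∞) :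
    ∃ ybar : X, f ybar + edist x0 ybar ≤ f x0 ∧
      ∀ z : X, f ybar ≤ f z + edist z ybar := by
  set S : X → Set X := fun x => {y | f y + edist x y ≤ f x} with hS
  have hmem : ∀ x, x ∈ S x := fun x => by simp [hS]
  -- choice step
  have claim : ∀ (n : ℕ) (x : X), ∃ y, y ∈ S x ∧ f y ≤ sInf (f '' S x) + 2⁻¹ ^ n := by
    intro n x
    rcases eq_or_ne (sInf (f '' S x)) ∞ with h | h
    · exact ⟨x, hmem x, by simp [h]⟩
    · have : sInf (f '' S x) < sInf (f '' S x) + 2⁻¹ ^ n :=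
        ENNReal.lt_add_right h (pow_ne_zero n (by norm_num))
      obtain ⟨v, hv, hlt⟩ := sInf_lt_iff.1 this
      obtain ⟨y, hy, rfl⟩ := hv
      exact ⟨y, hy, hlt.le⟩
  choose g hg1 hg2 using claim
  set a : ℕ → X := fun n => Nat.rec x0 (fun n y => g n y) n with ha
  have ha0 : a 0 = x0 := rfl
  have haS : ∀ n, a (n + 1) ∈ S (a n) := fun n => hg1 n (a n)
  have haI : ∀ n, f (a (n + 1)) ≤ sInf (f '' S (a n)) + 2⁻¹ ^ n := fun n => hg2 n (a n)
  -- transitivity along the sequence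
  have htrans : ∀ n m, n ≤ m → f (a m) + edist (a n) (a m) ≤ f (a n) := by
    intro n m hnm
    induction m with
    | zero => simp [Nat.le_zero.1 hnm]
    | succ m ih =>
      rcases Nat.lt_or_ge n (m + 1) with h | h
      · have h1 := haS m
        have h2 := ih (Nat.lt_succ_iff.1 h)
        calc f (a (m + 1)) + edist (a n) (a (m + 1))
            ≤ f (a (m + 1)) + (edist (a n) (a m) + edist (a m) (a (m + 1))) := by
              gcongr; exact edist_triangle _ _ _
          _ = f (a (m + 1)) + edist (a m) (a (m + 1)) + edist (a n) (a m) := by ring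
          _ ≤ f (a m) + edist (a n) (a m) := by gcongr; exact h1
          _ ≤ f (a n) := h2
      · have : n = m + 1 := le_antisymm hnm h
        simp [this]
  have hanti : ∀ n m, n ≤ m → f (a m) ≤ f (a n) := fun n m h =>
    le_trans (le_add_right le_rfl) (htrans n m h)
  have hfin : ∀ n, f (a n) ≠ ∞ := fun n => fun h =>
    hx0 (top_le_iff.1 (h ▸ (ha0 ▸ hanti 0 n (Nat.zero_le n))))
  -- Cauchy
  set L := ⨅ n, f (a n) with hL
  have hLfin : L ≠ ∞ := fun h => hfin 0 (top_le_iff.1 (h ▸ iInf_le _ 0))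
  have hcauchy : CauchySeq a := by
    rw [EMetric.cauchySeq_iff]
    intro ε hε
    have : L < L + ε := ENNReal.lt_add_right hLfin hε.ne'
    obtain ⟨N, hN⟩ := iInf_lt_iff.1 this
    refine ⟨N, fun m hm n hn => ?_⟩
    wlog hnm : n ≤ m generalizing n m
    · rw [edist_comm]; exact this n hn m hm (le_of_not_ge hnm)
    have h1 : f (a m) + edist (a n) (a m) ≤ f (a n) := htrans n m hnm
    have h2 : f (a n) ≤ f (a N) := hanti N n hn
    have : f (a m) + edist (a n) (a m) < f (a m) + ε :=
      lt_of_le_of_lt (h1.trans h2) (hN.trans_le (add_le_add (iInf_le _ m) le_rfl))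
    rw [edist_comm]
    exact (ENNReal.add_lt_add_iff_left (hfin m)).1 this
  obtain ⟨ybar, hy⟩ := cauchySeq_tendsto_of_complete hcauchy
  -- ybar ∈ S (a n) for all n
  have hliminf : f ybar ≤ liminf (fun m => f (a m)) atTop := by
    have h1 : f ybar ≤ liminf f (𝓝 ybar) :=
      lowerSemicontinuousAt_iff_le_liminf.1 (hf ybar)
    refine h1.trans ?_
    rw [show (fun m => f (a m)) = f ∘ a from rfl, Filter.liminf_comp]
    exact liminf_le_liminf_of_le hy
  have hyS : ∀ n, f ybar + edist (a n) ybar ≤ f (a n) := by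
    intro n
    have hlsc : LowerSemicontinuous (fun y => f y + edist (a n) y) :=
      hf.add ((continuous_const.edist continuous_id).lowerSemicontinuous)
    have h1 : f ybar + edist (a n) ybar ≤ liminf (fun y => f y + edist (a n) y) (𝓝 ybar) :=
      lowerSemicontinuousAt_iff_le_liminf.1 (hlsc ybar)
    refine h1.trans ?_
    have h2 : liminf (fun y => f y + edist (a n) y) (𝓝 ybar)
        ≤ liminf (fun m => f (a m) + edist (a n) (a m)) atTop := by
      rw [show (fun m => f (a m) + edist (a n) (a m)) = (fun y => f y + edist (a n) y) ∘ a from rfl,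
        Filter.liminf_comp]
      exact liminf_le_liminf_of_le hy
    refine h2.trans (liminf_le_of_le (by isBoundedDefault) ?_)
    intro b hb
    obtain ⟨m, hm⟩ := (hb.and (eventually_ge_atTop n)).exists
    exact hm.1.trans (htrans n m hm.2)
  have hyfin : f ybar ≠ ∞ := fun h => hfin 0 (top_le_iff.1 ((le_add_right le_rfl).trans (h ▸ hyS 0)))
  refine ⟨ybar, ha0 ▸ hyS 0, ?_⟩
  intro z
  by_contra hcon
  push_neg at hcon
  have hzS : f z + edist z ybar ≤ f ybar := hcon.le
  have hzfin : f z ≠ ∞ := fun h =>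
    hyfin (top_le_iff.1 ((le_add_right le_rfl).trans (h ▸ hzS)))
  -- z ∈ S (a n) for all n
  have hzn : ∀ n, f z + edist (a n) z ≤ f (a n) := by
    intro n
    calc f z + edist (a n) z ≤ f z + (edist (a n) ybar + edist ybar z) := by
          gcongr; exact edist_triangle _ _ _
      _ = f z + edist z ybar + edist (a n) ybar := by rw [edist_comm z ybar]; ring
      _ ≤ f ybar + edist (a n) ybar := by gcongr
      _ ≤ f (a n) := hyS n
  have hdz : ∀ n, edist (a (n + 1)) z ≤ 2⁻¹ ^ n := by
    intro n
    have h1 : f z + edist (a (n + 1)) z ≤ f (a (n + 1)) := hzn (n + 1)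
    have h2 : f (a (n + 1)) ≤ f z + 2⁻¹ ^ n :=
      (haI n).trans (by gcongr; exact sInf_le ⟨z, hzn n, rfl⟩)
    exact (ENNReal.add_le_add_iff_left hzfin).1 (h1.trans h2)
  have htz : Tendsto (fun n => a (n + 1)) atTop (𝓝 z) := by
    rw [EMetric.tendsto_atTop]
    intro ε hε
    obtain ⟨n, hn⟩ := ENNReal.exists_inv_two_pow_lt hε.ne'
    refine ⟨n, fun m hm => lt_of_le_of_lt ((hdz m).trans ?_) hn⟩
    exact pow_le_pow_of_le_one zero_le (by norm_num) hm
  have hzy : z = ybar := tendsto_nhds_unique htz (hy.comp (tendsto_add_atTop_nat 1))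
  rw [hzy, edist_self, add_zero] at hcon
  exact lt_irrefl _ hcon


/-- Ekeland's variational principle, order-theoretic form. -/
theorem ekeland_variational_principle {X : Type*} [MetricSpace X] [CompleteSpace X]
    (f : X → ℝ≥0∞) (hf : LowerSemicontinuous f) (xbar : X) :
    ∃ ybar : X, f ybar + ENNReal.ofReal (dist xbar ybar) ≤ f xbar ∧
      ∀ z : X, f ybar ≤ f z + ENNReal.ofReal (dist z ybar) := by
  simp only [← edist_dist]
  rcases eq_or_ne (f xbar) ∞ with h | h
  · by_cases hall : ∀ x : X, f x = ∞
    · exact ⟨xbar, by simp [h], fun z => by simp [hall z]⟩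
    · push_neg at hall
      obtain ⟨x0, hx0⟩ := hall
      obtain ⟨ybar, _, h2⟩ := aux f hf x0 hx0
      exact ⟨ybar, h ▸ le_top, h2⟩
  · obtain ⟨ybar, h1, h2⟩ := aux f hf xbar h
    exact ⟨ybar, h1, h2⟩
end

section
/- Let (X, d) be a complete metric space, f : X → [0, ∞] lower semicontinuous, and define z₁ ≤ z₂ iff f(z₁) + d(z₁, z₂) ≤ f(z₂). Let (xₙ) be a non-increasing sequence for this order (xₙ₊₁ ≤ xₙ) with f(x₀) < ∞. Then (xₙ) is a Cauchy sequence and converges to a limit x∞ satisfying x∞ ≤ xₙ for every n. -/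
open ENNReal Filter

/-- A non-increasing sequence for the Ekeland order with `f x₀ < ∞` is Cauchy and
converges to a point below every term of the sequence. -/
theorem ekeland_chain_cauchy_limit {X : Type*} [MetricSpace X] [CompleteSpace X]
    (f : X → ℝ≥0∞) (hf : LowerSemicontinuous f) (x : ℕ → X)
    (hchain : ∀ n : ℕ, f (x (n + 1)) + ENNReal.ofReal (dist (x (n + 1)) (x n)) ≤ f (x n))
    (h0 : f (x 0) < ⊤) :
    CauchySeq x ∧ ∃ xlim : X, Tendsto x atTop (nhds xlim) ∧
      ∀ n : ℕ, f xlim + ENNReal.ofReal (dist xlim (x n)) ≤ f (x n) := by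
  have hmono : ∀ n, f (x (n + 1)) ≤ f (x n) := fun n =>
    le_trans (le_add_right le_rfl) (hchain n)
  have hfin : ∀ n, f (x n) < ⊤ := by
    intro n
    induction n with
    | zero => exact h0
    | succ k ih => exact lt_of_le_of_lt (hmono k) ih
  set d : ℕ → ℝ≥0∞ := fun n => f (x n) - f (x (n + 1)) with hd
  have hdist : ∀ n, edist (x n) (x (n + 1)) ≤ d n := by
    intro n
    rw [edist_comm, edist_dist]
    exact ENNReal.le_sub_of_add_le_left (hfin (n+1)).ne (hchain n)
  have hsum : ∀ n, (∑ i ∈ Finset.range n, d i) + f (x n) = f (x 0) := by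
    intro n
    induction n with
    | zero => simp
    | succ k ih =>
      rw [Finset.sum_range_succ, add_assoc, hd]
      rw [tsub_add_cancel_of_le (hmono k)]
      exact ih
  have htsum : (∑' n, d n) ≠ ⊤ := by
    rw [ENNReal.tsum_eq_iSup_sum]
    refine ne_top_of_le_ne_top h0.ne (iSup_le fun s => ?_)
    calc ∑ i ∈ s, d i ≤ ∑ i ∈ Finset.range (s.sup id + 1), d i := by
          refine Finset.sum_le_sum_of_subset fun i hi => ?_
          exact Finset.mem_range.2 (Nat.lt_succ_of_le (Finset.le_sup (f := id) hi))
      _ ≤ f (x 0) := by rw [← hsum (s.sup id + 1)]; exact le_add_right le_rfl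
  have hcauchy : CauchySeq x := cauchySeq_of_edist_le_of_tsum_ne_top d hdist htsum
  obtain ⟨xlim, hlim⟩ := cauchySeq_tendsto_of_complete hcauchy
  refine ⟨hcauchy, xlim, hlim, fun n => ?_⟩
  -- For each n, the function g y = f y + ofReal (dist y (x n)) is lsc
  have hg : LowerSemicontinuous fun y => f y + ENNReal.ofReal (dist y (x n)) :=
    hf.add ((ENNReal.continuous_ofReal.comp (continuous_id.dist continuous_const)).lowerSemicontinuous)
  have hstep : ∀ m, f (x (n + m)) + ENNReal.ofReal (dist (x (n + m)) (x n)) ≤ f (x n) := by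
    intro m
    induction m with
    | zero => simp
    | succ k ih =>
      calc f (x (n + (k + 1))) + ENNReal.ofReal (dist (x (n + (k + 1))) (x n))
          ≤ f (x (n + k + 1)) + (ENNReal.ofReal (dist (x (n + k + 1)) (x (n + k)))
              + ENNReal.ofReal (dist (x (n + k)) (x n))) := by
            rw [show n + (k + 1) = n + k + 1 from rfl]
            gcongr
            rw [← ENNReal.ofReal_add dist_nonneg dist_nonneg]
            exact ENNReal.ofReal_le_ofReal (dist_triangle _ _ _)
        _ = (f (x (n + k + 1)) + ENNReal.ofReal (dist (x (n + k + 1)) (x (n + k))))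
              + ENNReal.ofReal (dist (x (n + k)) (x n)) := by ring
        _ ≤ f (x (n + k)) + ENNReal.ofReal (dist (x (n + k)) (x n)) := by
            gcongr; exact hchain (n + k)
        _ ≤ f (x n) := ih
  have h1 : f xlim + ENNReal.ofReal (dist xlim (x n)) ≤
      liminf (fun m => f (x (n + m)) + ENNReal.ofReal (dist (x (n + m)) (x n))) atTop := by
    have := (hg.le_liminf) xlim
    refine le_trans this ?_
    have hmap : Tendsto (fun m => x (n + m)) atTop (nhds xlim) := by
      simpa [Function.comp_def, add_comm] using hlim.comp (tendsto_add_atTop_nat n)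
    exact liminf_le_liminf_of_le hmap
  have h2 : liminf (fun m => f (x (n + m)) + ENNReal.ofReal (dist (x (n + m)) (x n))) atTop
      ≤ f (x n) :=
    liminf_le_of_frequently_le (Frequently.of_forall hstep)
  exact le_trans h1 h2
end

section
/- Let (P, ≤) be a partially ordered set and F : P → ℝ a strictly monotone function (p < q implies F(p) < F(q)) that is bounded above. Suppose that every non-decreasing sequence (pₙ)_{n∈ℕ} in P has an upper bound in P, and that F is 'approximately realizing suprema' in the sense that for every p ∈ P, setting G(p) := sup{F(q) : q ≥ p}, there exists q ≥ p with F(q) ≥ (F(p) + G(p))/2. Then for every p₀ ∈ P there exists a maximal element m ∈ P with m ≥ p₀ (maximal meaning m ≤ q implies m = q). -/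
/-- Abstract `big steps' maximality argument: a partial order with a bounded
strictly monotone real-valued function, upper bounds for increasing sequences,
and approximate realization of suprema, has maximal elements above any point. -/
theorem exists_maximal_of_strictMono_bounded {P : Type*} [PartialOrder P]
    (F : P → ℝ) (hmono : ∀ p q : P, p < q → F p < F q)
    (hbdd : BddAbove (Set.range F))
    (hchain : ∀ p : ℕ → P, (∀ n, p n ≤ p (n + 1)) → ∃ q : P, ∀ n, p n ≤ q)
    (happrox : ∀ p : P, ∃ q : P, p ≤ q ∧
      (F p + sSup (F '' Set.Ici p)) / 2 ≤ F q)
    (p₀ : P) :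
    ∃ m : P, p₀ ≤ m ∧ ∀ q : P, m ≤ q → m = q := by
  classical
  set G : P → ℝ := fun p => sSup (F '' Set.Ici p) with hG
  have hbddp : ∀ p : P, BddAbove (F '' Set.Ici p) := fun p =>
    hbdd.mono (Set.image_subset_range _ _)
  have hle_G : ∀ p r : P, p ≤ r → F r ≤ G p := fun p r hpr =>
    le_csSup (hbddp p) ⟨r, hpr, rfl⟩
  have hG_anti : ∀ p q : P, p ≤ q → G q ≤ G p := fun p q hpq =>
    csSup_le_csSup (hbddp p) ⟨F q, q, le_refl q, rfl⟩
      (Set.image_mono (Set.Ici_subset_Ici.2 hpq))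
  have hFle : ∀ p q : P, p ≤ q → F p ≤ F q := by
    intro p q hpq
    rcases eq_or_lt_of_le hpq with h | h
    · rw [h]
    · exact (hmono p q h).le
  -- construct sequence
  let seq : ℕ → P := fun n => Nat.rec p₀ (fun _ p => (happrox p).choose) n
  have hseq0 : seq 0 = p₀ := rfl
  have hstep : ∀ n, seq n ≤ seq (n + 1) ∧
      (F (seq n) + G (seq n)) / 2 ≤ F (seq (n + 1)) := fun n =>
    (happrox (seq n)).choose_spec
  have hmon : ∀ n, seq n ≤ seq (n + 1) := fun n => (hstep n).1
  -- geometric decay of G - F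
  set D : ℝ := G p₀ - F p₀ with hD
  have hgap : ∀ n, G (seq n) - F (seq n) ≤ D / 2 ^ n := by
    intro n
    induction n with
    | zero => simp [hseq0, hD]
    | succ n ih =>
      have h1 := (hstep n).2
      have h2 : G (seq (n + 1)) ≤ G (seq n) := hG_anti _ _ (hmon n)
      have : G (seq (n+1)) - F (seq (n+1)) ≤ (G (seq n) - F (seq n)) / 2 := by
        linarith
      calc G (seq (n+1)) - F (seq (n+1)) ≤ (G (seq n) - F (seq n)) / 2 := this
        _ ≤ (D / 2 ^ n) / 2 := by linarith
        _ = D / 2 ^ (n+1) := by ring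
  obtain ⟨q, hq⟩ := hchain seq hmon
  refine ⟨q, hseq0 ▸ hq 0, ?_⟩
  intro r hqr
  by_contra hne
  have hlt : q < r := lt_of_le_of_ne hqr hne
  have hFlt : F q < F r := hmono _ _ hlt
  -- F r ≤ F q + D/2^n for all n
  have key : ∀ n, F r ≤ F q + D / 2 ^ n := by
    intro n
    have h1 : F r ≤ G (seq n) := hle_G _ _ ((hq n).trans hqr)
    have h2 : F (seq n) ≤ F q := hFle _ _ (hq n)
    have h3 := hgap n
    linarith
  -- choose n with D / 2^n < F r - F q
  set ε : ℝ := F r - F q with hε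
  have hεpos : 0 < ε := by simp [hε]; linarith
  obtain ⟨n, hn⟩ := pow_unbounded_of_one_lt (D / ε) (one_lt_two (α := ℝ))
  have h2n : (0:ℝ) < 2 ^ n := by positivity
  have : D / 2 ^ n < ε := by
    rw [div_lt_iff₀ h2n]
    have := (div_lt_iff₀ hεpos).1 hn
    linarith
  have := key n
  simp [hε] at *
  linarith
end
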